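/- Let g_r, g_b be nonzero vectors in ℝ^d with angle φ between them satisfying cos φ > -1 (not anti-parallel), g = g_r + g_b, and let g^c = g_b/‖g_b‖ + g_r/‖g_r‖ and g* = (⟨g^c, g⟩/‖g^c‖²) g^c. Then ‖g - g*‖ ≤ ‖g‖ and ‖g*‖ ≥ cos(φ/2)·‖g‖. -/

import Mathlib

open RealInnerProductSpace

theorem stmt9 {d : ℕ} (g_r g_b : EuclideanSpace ℝ (Fin d))
    (hr : g_r ≠ 0) (hb : g_b ≠ 0)
    (φ : ℝ) (hφ : φ = Real.arccos (⟪g_r, g_b⟫ / (‖g_r‖ * ‖g_b‖)))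
    (hcos : Real.cos φ > -1)
    (g gc gstar : EuclideanSpace ℝ (Fin d))
    (hg : g = g_r + g_b)
    (hgc : gc = ‖g_b‖⁻¹ • g_b + ‖g_r‖⁻¹ • g_r)
    (hgs : gstar = (⟪gc, g⟫ / ‖gc‖ ^ 2) • gc) :
    ‖g - gstar‖ ≤ ‖g‖ ∧ ‖gstar‖ ≥ Real.cos (φ / 2) * ‖g‖ := by
  set r := ‖g_r‖ with hrdef
  set b := ‖g_b‖ with hbdef
  have hr0 : 0 < r := norm_pos_iff.mpr hr
  have hb0 : 0 < b := norm_pos_iff.mpr hb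
  set c : ℝ := ⟪g_r, g_b⟫ / (r * b) with hcdef
  have habs : |⟪g_r, g_b⟫| ≤ r * b := abs_real_inner_le_norm g_r g_b
  have hc1 : c ≤ 1 := by
    rw [hcdef, div_le_one (by positivity)]
    exact le_trans (le_abs_self _) habs
  have hcm1 : -1 ≤ c := by
    rw [hcdef, le_div_iff₀ (by positivity)]
    nlinarith [neg_abs_le ⟪g_r, g_b⟫]
  have hcosφ : Real.cos φ = c := by
    rw [hφ, Real.cos_arccos hcm1 hc1]
  have hcgt : -1 < c := by rw [hcosφ] at hcos; exact hcos
  have hip : ⟪g_r, g_b⟫ = r * b * c := by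
    rw [hcdef]; field_simp
  have hbr : ⟪g_b, g_r⟫ = r * b * c := by rw [real_inner_comm]; exact hip
  have hrr : ⟪g_r, g_r⟫ = r ^ 2 := real_inner_self_eq_norm_sq g_r
  have hbb : ⟪g_b, g_b⟫ = b ^ 2 := real_inner_self_eq_norm_sq g_b
  -- inner products
  have hgcg : ⟪gc, g⟫ = (r + b) * (1 + c) := by
    rw [hgc, hg]
    simp only [inner_add_add_self, inner_add_left, inner_add_right,
      real_inner_smul_left, real_inner_smul_right, hip, hbr, hrr, hbb]
    field_simp
    ring
  have hgc2 : ‖gc‖ ^ 2 = 2 * (1 + c) := by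
    rw [← real_inner_self_eq_norm_sq, hgc]
    simp only [inner_add_add_self, real_inner_smul_left, real_inner_smul_right,
      hip, hbr, hrr, hbb]
    field_simp
    ring
  have hg2 : ‖g‖ ^ 2 = r ^ 2 + b ^ 2 + 2 * (r * b * c) := by
    rw [← real_inner_self_eq_norm_sq, hg]
    simp only [inner_add_add_self, hip, hbr, hrr, hbb]
    ring
  have h1c : (0:ℝ) < 1 + c := by linarith
  have hgc2ne : ‖gc‖ ^ 2 ≠ 0 := by rw [hgc2]; positivity
  -- orthogonality
  have horth : ⟪gstar, g - gstar⟫ = 0 := by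
    rw [hgs]
    rw [inner_sub_right, real_inner_smul_left, real_inner_smul_left,
      real_inner_smul_right, real_inner_self_eq_norm_sq]
    field_simp
    simp
  have hpyth : ‖g‖ ^ 2 = ‖gstar‖ ^ 2 + ‖g - gstar‖ ^ 2 := by
    have := norm_add_sq_real gstar (g - gstar)
    rw [horth] at this
    simpa using this
  have hstar2 : ‖gstar‖ ^ 2 = (r + b) ^ 2 * (1 + c) / 2 := by
    rw [hgs, norm_smul, Real.norm_eq_abs, mul_pow, sq_abs, hgcg, hgc2]
    field_simp
  constructor
  · have h2 : ‖g - gstar‖ ^ 2 ≤ ‖g‖ ^ 2 := by nlinarith [sq_nonneg ‖gstar‖]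
    have := Real.sqrt_le_sqrt h2
    rwa [Real.sqrt_sq (norm_nonneg _), Real.sqrt_sq (norm_nonneg _)] at this
  · have hφmem : φ ∈ Set.Icc 0 Real.pi := by
      rw [hφ]; exact ⟨Real.arccos_nonneg _, Real.arccos_le_pi _⟩
    have hcoshalf : 0 ≤ Real.cos (φ / 2) := by
      apply Real.cos_nonneg_of_mem_Icc
      constructor
      · linarith [Real.pi_pos, hφmem.1]
      · linarith [hφmem.2]
    have hcossq : Real.cos (φ / 2) ^ 2 = (1 + c) / 2 := by
      rw [Real.cos_half (by linarith [hφmem.1, Real.pi_pos]) hφmem.2, hcosφ,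
        Real.sq_sqrt (by linarith)]
    have htri : ‖g‖ ≤ r + b := by
      rw [hg]; exact norm_add_le _ _
    have hsq : (Real.cos (φ / 2) * ‖g‖) ^ 2 ≤ ‖gstar‖ ^ 2 := by
      rw [mul_pow, hcossq, hstar2]
      have h3 : ‖g‖ ^ 2 ≤ (r + b) ^ 2 := pow_le_pow_left₀ (norm_nonneg g) htri 2
      have h4 : (1 + c) / 2 * ‖g‖ ^ 2 ≤ (1 + c) / 2 * (r + b) ^ 2 :=
        mul_le_mul_of_nonneg_left h3 (by linarith)
      linarith
    have := Real.sqrt_le_sqrt hsq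
    rwa [Real.sqrt_sq (mul_nonneg hcoshalf (norm_nonneg g)),
      Real.sqrt_sq (norm_nonneg _)] at this
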